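/- The second fundamental form of the dihedral Enneper parametrization of order n with respect to the unit normal ν is given, for all u > 0 and v ∈ ℝ, by e = σⁿ_{uu}·ν = −n·u^{n−1}cos((n+1)v), f = σⁿ_{uv}·ν = n·uⁿ·sin((n+1)v), and g = σⁿ_{vv}·ν = n·u^{n+1}cos((n+1)v). -/

import Mathlib

noncomputable section
open MeasureTheory Real

/-- Dot product on `ℝ³ = ℝ × ℝ × ℝ`. -/
def dot3 (a b : ℝ × ℝ × ℝ) : ℝ := a.1 * b.1 + a.2.1 * b.2.1 + a.2.2 * b.2.2

/-- Euclidean norm on `ℝ³ = ℝ × ℝ × ℝ`. -/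
def norm3 (a : ℝ × ℝ × ℝ) : ℝ := Real.sqrt (dot3 a a)

/-- Partial derivative in the first (`u`) variable. -/
def pdU {E : Type*} [NormedAddCommGroup E] [NormedSpace ℝ E] (f : ℝ × ℝ → E) (p : ℝ × ℝ) : E :=
  deriv (fun x => f (x, p.2)) p.1

/-- Partial derivative in the second (`v`) variable. -/
def pdV {E : Type*} [NormedAddCommGroup E] [NormedSpace ℝ E] (f : ℝ × ℝ → E) (p : ℝ × ℝ) : E :=
  deriv (fun y => f (p.1, y)) p.2

/-- The dihedral Enneper parametrization `σⁿ` of order `n`. -/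
def enneper (n : ℕ) (p : ℝ × ℝ) : ℝ × ℝ × ℝ :=
  (p.1 * ((2 * (n : ℝ) + 1) * Real.cos p.2 - p.1 ^ (2 * n) * Real.cos ((2 * (n : ℝ) + 1) * p.2))
      / (4 * (n : ℝ) + 2),
   -(p.1 * ((2 * (n : ℝ) + 1) * Real.sin p.2 + p.1 ^ (2 * n) * Real.sin ((2 * (n : ℝ) + 1) * p.2)))
      / (4 * (n : ℝ) + 2),
   p.1 ^ (n + 1) * Real.cos (((n : ℝ) + 1) * p.2) / ((n : ℝ) + 1))

/-- The unit normal `ν` of the dihedral Enneper parametrization of order `n`. -/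
def enneperNormal (n : ℕ) (p : ℝ × ℝ) : ℝ × ℝ × ℝ :=
  (1 + p.1 ^ (2 * n))⁻¹ •
    (2 * p.1 ^ n * Real.cos ((n : ℝ) * p.2),
     2 * p.1 ^ n * Real.sin ((n : ℝ) * p.2),
     p.1 ^ (2 * n) - 1)

/- ### Auxiliary lemmas -/

lemma hasDerivAt_cos_mul (a y : ℝ) :
    HasDerivAt (fun t => Real.cos (a * t)) (-Real.sin (a * y) * a) y := by
  simpa [Function.comp_def] using (Real.hasDerivAt_cos (a * y)).comp y ((hasDerivAt_id y).const_mul a)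

lemma hasDerivAt_sin_mul (a y : ℝ) :
    HasDerivAt (fun t => Real.sin (a * t)) (Real.cos (a * y) * a) y := by
  simpa [Function.comp_def] using (Real.hasDerivAt_sin (a * y)).comp y ((hasDerivAt_id y).const_mul a)

lemma dot3_smul (X : ℝ × ℝ × ℝ) (c : ℝ) (Y : ℝ × ℝ × ℝ) :
    dot3 X (c • Y) = c * dot3 X Y := by
  obtain ⟨y1, y2, y3⟩ := Y
  simp only [dot3, Prod.smul_mk, smul_eq_mul]
  ring

/-- Closed form for `∂σ/∂u`. -/
def sU (n : ℕ) (p : ℝ × ℝ) : ℝ × ℝ × ℝ :=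
  ((Real.cos p.2 - p.1 ^ (2 * n) * Real.cos ((2 * (n : ℝ) + 1) * p.2)) / 2,
   -(Real.sin p.2 + p.1 ^ (2 * n) * Real.sin ((2 * (n : ℝ) + 1) * p.2)) / 2,
   p.1 ^ n * Real.cos (((n : ℝ) + 1) * p.2))

/-- Closed form for `∂σ/∂v`. -/
def sV (n : ℕ) (p : ℝ × ℝ) : ℝ × ℝ × ℝ :=
  (p.1 * (-Real.sin p.2 + p.1 ^ (2 * n) * Real.sin ((2 * (n : ℝ) + 1) * p.2)) / 2,
   -(p.1 * (Real.cos p.2 + p.1 ^ (2 * n) * Real.cos ((2 * (n : ℝ) + 1) * p.2))) / 2,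
   -(p.1 ^ (n + 1) * Real.sin (((n : ℝ) + 1) * p.2)))

lemma pdU_enneper (m : ℕ) (p : ℝ × ℝ) : pdU (enneper (m + 1)) p = sU (m + 1) p := by
  obtain ⟨u, v⟩ := p
  have h1 : HasDerivAt
      (fun x : ℝ => x * ((2 * ((m+1 : ℕ) : ℝ) + 1) * Real.cos v
          - x ^ (2 * (m+1)) * Real.cos ((2 * ((m+1 : ℕ) : ℝ) + 1) * v)) / (4 * ((m+1 : ℕ) : ℝ) + 2))
      ((1 * ((2 * ((m+1 : ℕ) : ℝ) + 1) * Real.cos v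
          - u ^ (2 * (m+1)) * Real.cos ((2 * ((m+1 : ℕ) : ℝ) + 1) * v))
        + u * (-(((2 * (m+1) : ℕ) : ℝ) * u ^ (2 * (m+1) - 1)
            * Real.cos ((2 * ((m+1 : ℕ) : ℝ) + 1) * v)))) / (4 * ((m+1 : ℕ) : ℝ) + 2)) u :=
    (((hasDerivAt_id u).mul
      (((hasDerivAt_pow (2 * (m+1)) u).mul_const _).const_sub _)).div_const _)
  have h2 : HasDerivAt
      (fun x : ℝ => -(x * ((2 * ((m+1 : ℕ) : ℝ) + 1) * Real.sin v
          + x ^ (2 * (m+1)) * Real.sin ((2 * ((m+1 : ℕ) : ℝ) + 1) * v))) / (4 * ((m+1 : ℕ) : ℝ) + 2))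
      (-((1 * ((2 * ((m+1 : ℕ) : ℝ) + 1) * Real.sin v
          + u ^ (2 * (m+1)) * Real.sin ((2 * ((m+1 : ℕ) : ℝ) + 1) * v))
        + u * (((2 * (m+1) : ℕ) : ℝ) * u ^ (2 * (m+1) - 1)
            * Real.sin ((2 * ((m+1 : ℕ) : ℝ) + 1) * v)))) / (4 * ((m+1 : ℕ) : ℝ) + 2)) u :=
    ((((hasDerivAt_id u).mul
      (((hasDerivAt_pow (2 * (m+1)) u).mul_const _).const_add _)).neg).div_const _)
  have h3 : HasDerivAt
      (fun x : ℝ => x ^ (m + 1 + 1) * Real.cos ((((m+1 : ℕ) : ℝ) + 1) * v) / (((m+1 : ℕ) : ℝ) + 1))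
      ((((m+1+1 : ℕ) : ℝ) * u ^ (m + 1 + 1 - 1) * Real.cos ((((m+1 : ℕ) : ℝ) + 1) * v))
          / (((m+1 : ℕ) : ℝ) + 1)) u :=
    (((hasDerivAt_pow (m+1+1) u).mul_const _).div_const _)
  have H := (h1.prodMk (h2.prodMk h3)).deriv
  simp only [pdU, enneper, sU]
  rw [H]
  have e1 : 2 * (m + 1) - 1 = 2 * m + 1 := by omega
  have e2 : m + 1 + 1 - 1 = m + 1 := by omega
  rw [e1, e2, Prod.mk.injEq, Prod.mk.injEq]
  have hd : (4 * ((m+1 : ℕ) : ℝ) + 2) ≠ 0 := by positivity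
  have hd2 : (((m+1 : ℕ) : ℝ) + 1) ≠ 0 := by positivity
  refine ⟨?_, ?_, ?_⟩ <;> push_cast <;> field_simp <;> ring

lemma pdV_enneper (m : ℕ) (p : ℝ × ℝ) : pdV (enneper (m + 1)) p = sV (m + 1) p := by
  obtain ⟨u, v⟩ := p
  have h1 : HasDerivAt
      (fun y : ℝ => u * ((2 * ((m+1 : ℕ) : ℝ) + 1) * Real.cos y
          - u ^ (2 * (m+1)) * Real.cos ((2 * ((m+1 : ℕ) : ℝ) + 1) * y)) / (4 * ((m+1 : ℕ) : ℝ) + 2))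
      (u * ((2 * ((m+1 : ℕ) : ℝ) + 1) * -Real.sin v
          - u ^ (2 * (m+1)) * (-Real.sin ((2 * ((m+1 : ℕ) : ℝ) + 1) * v) * (2 * ((m+1 : ℕ) : ℝ) + 1)))
        / (4 * ((m+1 : ℕ) : ℝ) + 2)) v :=
    (((((Real.hasDerivAt_cos v).const_mul _).sub
        ((hasDerivAt_cos_mul (2 * ((m+1 : ℕ) : ℝ) + 1) v).const_mul _)).const_mul u).div_const _)
  have h2 : HasDerivAt
      (fun y : ℝ => -(u * ((2 * ((m+1 : ℕ) : ℝ) + 1) * Real.sin y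
          + u ^ (2 * (m+1)) * Real.sin ((2 * ((m+1 : ℕ) : ℝ) + 1) * y))) / (4 * ((m+1 : ℕ) : ℝ) + 2))
      (-(u * ((2 * ((m+1 : ℕ) : ℝ) + 1) * Real.cos v
          + u ^ (2 * (m+1)) * (Real.cos ((2 * ((m+1 : ℕ) : ℝ) + 1) * v) * (2 * ((m+1 : ℕ) : ℝ) + 1))))
        / (4 * ((m+1 : ℕ) : ℝ) + 2)) v :=
    ((((((Real.hasDerivAt_sin v).const_mul _).add
        ((hasDerivAt_sin_mul (2 * ((m+1 : ℕ) : ℝ) + 1) v).const_mul _)).const_mul u).neg).div_const _)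
  have h3 : HasDerivAt
      (fun y : ℝ => u ^ (m + 1 + 1) * Real.cos ((((m+1 : ℕ) : ℝ) + 1) * y) / (((m+1 : ℕ) : ℝ) + 1))
      (u ^ (m + 1 + 1) * (-Real.sin ((((m+1 : ℕ) : ℝ) + 1) * v) * (((m+1 : ℕ) : ℝ) + 1))
          / (((m+1 : ℕ) : ℝ) + 1)) v :=
    (((hasDerivAt_cos_mul (((m+1 : ℕ) : ℝ) + 1) v).const_mul _).div_const _)
  have H := (h1.prodMk (h2.prodMk h3)).deriv
  simp only [pdV, enneper, sV]
  rw [H, Prod.mk.injEq, Prod.mk.injEq]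
  have hd : (4 * ((m+1 : ℕ) : ℝ) + 2) ≠ 0 := by positivity
  have hd2 : (((m+1 : ℕ) : ℝ) + 1) ≠ 0 := by positivity
  refine ⟨?_, ?_, ?_⟩ <;> push_cast <;> field_simp <;> ring

lemma pdUU_enneper (m : ℕ) (p : ℝ × ℝ) : pdU (sU (m + 1)) p =
    (-(((m+1 : ℕ) : ℝ) * p.1 ^ (2 * m + 1) * Real.cos ((2 * ((m+1 : ℕ) : ℝ) + 1) * p.2)),
     -(((m+1 : ℕ) : ℝ) * p.1 ^ (2 * m + 1) * Real.sin ((2 * ((m+1 : ℕ) : ℝ) + 1) * p.2)),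
     ((m+1 : ℕ) : ℝ) * p.1 ^ m * Real.cos ((((m+1 : ℕ) : ℝ) + 1) * p.2)) := by
  obtain ⟨u, v⟩ := p
  have h1 : HasDerivAt
      (fun x : ℝ => (Real.cos v - x ^ (2 * (m+1)) * Real.cos ((2 * ((m+1 : ℕ) : ℝ) + 1) * v)) / 2)
      (-(((2 * (m+1) : ℕ) : ℝ) * u ^ (2 * (m+1) - 1)
          * Real.cos ((2 * ((m+1 : ℕ) : ℝ) + 1) * v)) / 2) u :=
    ((((hasDerivAt_pow (2 * (m+1)) u).mul_const _).const_sub _).div_const _)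
  have h2 : HasDerivAt
      (fun x : ℝ => -(Real.sin v + x ^ (2 * (m+1)) * Real.sin ((2 * ((m+1 : ℕ) : ℝ) + 1) * v)) / 2)
      (-(((2 * (m+1) : ℕ) : ℝ) * u ^ (2 * (m+1) - 1)
          * Real.sin ((2 * ((m+1 : ℕ) : ℝ) + 1) * v)) / 2) u :=
    (((((hasDerivAt_pow (2 * (m+1)) u).mul_const _).const_add _).neg).div_const _)
  have h3 : HasDerivAt
      (fun x : ℝ => x ^ (m + 1) * Real.cos ((((m+1 : ℕ) : ℝ) + 1) * v))
      ((((m+1 : ℕ) : ℝ) * u ^ (m + 1 - 1)) * Real.cos ((((m+1 : ℕ) : ℝ) + 1) * v)) u :=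
    ((hasDerivAt_pow (m+1) u).mul_const _)
  have H := (h1.prodMk (h2.prodMk h3)).deriv
  simp only [pdU, sU]
  rw [H]
  have e1 : 2 * (m + 1) - 1 = 2 * m + 1 := by omega
  have e2 : m + 1 - 1 = m := by omega
  rw [e1, e2, Prod.mk.injEq, Prod.mk.injEq]
  refine ⟨?_, ?_, ?_⟩ <;> push_cast <;> ring

lemma pdVU_enneper (m : ℕ) (p : ℝ × ℝ) : pdV (sU (m + 1)) p =
    ((-Real.sin p.2 + (2 * ((m+1 : ℕ) : ℝ) + 1) * p.1 ^ (2 * (m+1))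
        * Real.sin ((2 * ((m+1 : ℕ) : ℝ) + 1) * p.2)) / 2,
     -(Real.cos p.2 + (2 * ((m+1 : ℕ) : ℝ) + 1) * p.1 ^ (2 * (m+1))
        * Real.cos ((2 * ((m+1 : ℕ) : ℝ) + 1) * p.2)) / 2,
     -((((m+1 : ℕ) : ℝ) + 1) * p.1 ^ (m+1) * Real.sin ((((m+1 : ℕ) : ℝ) + 1) * p.2))) := by
  obtain ⟨u, v⟩ := p
  have h1 : HasDerivAt
      (fun y : ℝ => (Real.cos y - u ^ (2 * (m+1)) * Real.cos ((2 * ((m+1 : ℕ) : ℝ) + 1) * y)) / 2)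
      ((-Real.sin v - u ^ (2 * (m+1))
          * (-Real.sin ((2 * ((m+1 : ℕ) : ℝ) + 1) * v) * (2 * ((m+1 : ℕ) : ℝ) + 1))) / 2) v :=
    (((Real.hasDerivAt_cos v).sub
        ((hasDerivAt_cos_mul (2 * ((m+1 : ℕ) : ℝ) + 1) v).const_mul _)).div_const _)
  have h2 : HasDerivAt
      (fun y : ℝ => -(Real.sin y + u ^ (2 * (m+1)) * Real.sin ((2 * ((m+1 : ℕ) : ℝ) + 1) * y)) / 2)
      (-(Real.cos v + u ^ (2 * (m+1))
          * (Real.cos ((2 * ((m+1 : ℕ) : ℝ) + 1) * v) * (2 * ((m+1 : ℕ) : ℝ) + 1))) / 2) v :=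
    ((((Real.hasDerivAt_sin v).add
        ((hasDerivAt_sin_mul (2 * ((m+1 : ℕ) : ℝ) + 1) v).const_mul _)).neg).div_const _)
  have h3 : HasDerivAt
      (fun y : ℝ => u ^ (m + 1) * Real.cos ((((m+1 : ℕ) : ℝ) + 1) * y))
      (u ^ (m + 1) * (-Real.sin ((((m+1 : ℕ) : ℝ) + 1) * v) * (((m+1 : ℕ) : ℝ) + 1))) v :=
    ((hasDerivAt_cos_mul (((m+1 : ℕ) : ℝ) + 1) v).const_mul _)
  have H := (h1.prodMk (h2.prodMk h3)).deriv
  simp only [pdV, sU]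
  rw [H, Prod.mk.injEq, Prod.mk.injEq]
  refine ⟨?_, ?_, ?_⟩ <;> push_cast <;> ring

lemma pdVV_enneper (m : ℕ) (p : ℝ × ℝ) : pdV (sV (m + 1)) p =
    (p.1 * (-Real.cos p.2 + (2 * ((m+1 : ℕ) : ℝ) + 1) * p.1 ^ (2 * (m+1))
        * Real.cos ((2 * ((m+1 : ℕ) : ℝ) + 1) * p.2)) / 2,
     p.1 * (Real.sin p.2 + (2 * ((m+1 : ℕ) : ℝ) + 1) * p.1 ^ (2 * (m+1))
        * Real.sin ((2 * ((m+1 : ℕ) : ℝ) + 1) * p.2)) / 2,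
     -((((m+1 : ℕ) : ℝ) + 1) * p.1 ^ (m+1+1) * Real.cos ((((m+1 : ℕ) : ℝ) + 1) * p.2))) := by
  obtain ⟨u, v⟩ := p
  have h1 : HasDerivAt
      (fun y : ℝ => u * (-Real.sin y + u ^ (2 * (m+1)) * Real.sin ((2 * ((m+1 : ℕ) : ℝ) + 1) * y)) / 2)
      (u * (-Real.cos v + u ^ (2 * (m+1))
          * (Real.cos ((2 * ((m+1 : ℕ) : ℝ) + 1) * v) * (2 * ((m+1 : ℕ) : ℝ) + 1))) / 2) v :=
    ((((Real.hasDerivAt_sin v).neg.add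
        ((hasDerivAt_sin_mul (2 * ((m+1 : ℕ) : ℝ) + 1) v).const_mul _)).const_mul u).div_const _)
  have h2 : HasDerivAt
      (fun y : ℝ => -(u * (Real.cos y + u ^ (2 * (m+1)) * Real.cos ((2 * ((m+1 : ℕ) : ℝ) + 1) * y))) / 2)
      (-(u * (-Real.sin v + u ^ (2 * (m+1))
          * (-Real.sin ((2 * ((m+1 : ℕ) : ℝ) + 1) * v) * (2 * ((m+1 : ℕ) : ℝ) + 1)))) / 2) v :=
    (((((Real.hasDerivAt_cos v).add
        ((hasDerivAt_cos_mul (2 * ((m+1 : ℕ) : ℝ) + 1) v).const_mul _)).const_mul u).neg).div_const _)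
  have h3 : HasDerivAt
      (fun y : ℝ => -(u ^ (m + 1 + 1) * Real.sin ((((m+1 : ℕ) : ℝ) + 1) * y)))
      (-(u ^ (m + 1 + 1) * (Real.cos ((((m+1 : ℕ) : ℝ) + 1) * v) * (((m+1 : ℕ) : ℝ) + 1)))) v :=
    (((hasDerivAt_sin_mul (((m+1 : ℕ) : ℝ) + 1) v).const_mul _).neg)
  have H := (h1.prodMk (h2.prodMk h3)).deriv
  simp only [pdV, sV]
  rw [H, Prod.mk.injEq, Prod.mk.injEq]
  refine ⟨?_, ?_, ?_⟩ <;> push_cast <;> ring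

theorem enneper_secondFundamentalForm (n : ℕ) (hn : 1 ≤ n) :
    ∀ p : ℝ × ℝ, 0 < p.1 →
      dot3 (pdU (pdU (enneper n)) p) (enneperNormal n p)
        = -(n : ℝ) * p.1 ^ (n - 1) * Real.cos (((n : ℝ) + 1) * p.2) ∧
      dot3 (pdV (pdU (enneper n)) p) (enneperNormal n p)
        = (n : ℝ) * p.1 ^ n * Real.sin (((n : ℝ) + 1) * p.2) ∧
      dot3 (pdV (pdV (enneper n)) p) (enneperNormal n p)
        = (n : ℝ) * p.1 ^ (n + 1) * Real.cos (((n : ℝ) + 1) * p.2) := by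
  obtain ⟨m, rfl⟩ := Nat.exists_eq_succ_of_ne_zero (by omega : n ≠ 0)
  rintro ⟨u, v⟩ hp
  have hu : 0 < u := hp
  have hne : ((1 : ℝ) + u ^ (2 * (m + 1))) ≠ 0 := by positivity
  have hUfun : pdU (enneper (m + 1)) = sU (m + 1) := funext (pdU_enneper m)
  have hVfun : pdV (enneper (m + 1)) = sV (m + 1) := funext (pdV_enneper m)
  have hB1 : Real.cos ((2 * ((m : ℝ) + 1) + 1) * v)
      * Real.cos (((m : ℝ) + 1) * v) + Real.sin ((2 * ((m : ℝ) + 1) + 1) * v)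
      * Real.sin (((m : ℝ) + 1) * v) = Real.cos (((m : ℝ) + 1 + 1) * v) := by
    rw [← Real.cos_sub]; congr 1; ring
  have hB2 : Real.sin ((2 * ((m : ℝ) + 1) + 1) * v)
      * Real.cos (((m : ℝ) + 1) * v) - Real.cos ((2 * ((m : ℝ) + 1) + 1) * v)
      * Real.sin (((m : ℝ) + 1) * v) = Real.sin (((m : ℝ) + 1 + 1) * v) := by
    rw [← Real.sin_sub]; congr 1; ring
  have hB3 : Real.sin v * Real.cos (((m : ℝ) + 1) * v)
      + Real.cos v * Real.sin (((m : ℝ) + 1) * v) = Real.sin (((m : ℝ) + 1 + 1) * v) := by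
    rw [← Real.sin_add]; congr 1; ring
  have hB4 : Real.cos v * Real.cos (((m : ℝ) + 1) * v)
      - Real.sin v * Real.sin (((m : ℝ) + 1) * v) = Real.cos (((m : ℝ) + 1 + 1) * v) := by
    rw [← Real.cos_add]; congr 1; ring
  refine ⟨?_, ?_, ?_⟩
  · rw [hUfun, pdUU_enneper, enneperNormal, dot3_smul, inv_mul_eq_div, div_eq_iff hne]
    simp only [Nat.succ_eq_add_one, dot3, Nat.add_sub_cancel]
    push_cast
    linear_combination (-2 * ((m : ℝ) + 1) * u ^ (3 * m + 2)) * hB1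
  · rw [hUfun, pdVU_enneper, enneperNormal, dot3_smul, inv_mul_eq_div, div_eq_iff hne]
    simp only [Nat.succ_eq_add_one, dot3]
    push_cast
    linear_combination (-(u ^ (m + 1))) * hB3
      + ((2 * ((m : ℝ) + 1) + 1) * u ^ (3 * m + 3)) * hB2
  · rw [hVfun, pdVV_enneper, enneperNormal, dot3_smul, inv_mul_eq_div, div_eq_iff hne]
    simp only [Nat.succ_eq_add_one, dot3]
    push_cast
    linear_combination (-(u ^ (m + 2))) * hB4
      + ((2 * ((m : ℝ) + 1) + 1) * u ^ (3 * m + 4)) * hB1
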